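/- For all distinct i, j ∈ {1,2,3}, the product μ_i·μ_j divides μ. -/

import Mathlib

noncomputable section

/-- The coercion of an integer vector in `ℤ³` to `ℝ³`. -/
def coe3 (v : Fin 3 → ℤ) : Fin 3 → ℝ := fun i => (v i : ℝ)

/-- A vector of `ℤ³` is primitive if the greatest common divisor of its components is 1. -/
def IsPrimitive (v : Fin 3 → ℤ) : Prop := Int.gcd (v 0) (Int.gcd (v 1) (v 2)) = 1

/-- The fundamental parallelepiped spanned by two vectors:
`◊(a,b) = {s•a + t•b : s,t ∈ [0,1)}`. -/
def para2 (a b : Fin 3 → ℝ) : Set (Fin 3 → ℝ) :=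
  {x | ∃ s t : ℝ, 0 ≤ s ∧ s < 1 ∧ 0 ≤ t ∧ t < 1 ∧ x = s • a + t • b}

/-- The fundamental parallelepiped spanned by three vectors:
`◊(a,b,c) = {s•a + t•b + u•c : s,t,u ∈ [0,1)}`. -/
def para3 (a b c : Fin 3 → ℝ) : Set (Fin 3 → ℝ) :=
  {x | ∃ s t u : ℝ, 0 ≤ s ∧ s < 1 ∧ 0 ≤ t ∧ t < 1 ∧ 0 ≤ u ∧ u < 1 ∧
    x = s • a + t • b + u • c}

/-- The integral points `ℤ³ ∩ ◊(a,b)` of a two-dimensional fundamental parallelepiped. -/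
def H2pts (a b : Fin 3 → ℤ) : Set (Fin 3 → ℤ) := {x | coe3 x ∈ para2 (coe3 a) (coe3 b)}

/-- The integral points `ℤ³ ∩ ◊(a,b,c)` of a three-dimensional fundamental parallelepiped. -/
def H3pts (a b c : Fin 3 → ℤ) : Set (Fin 3 → ℤ) :=
  {x | coe3 x ∈ para3 (coe3 a) (coe3 b) (coe3 c)}

noncomputable section
lemma coe3_injective : Function.Injective coe3 := fun x y h =>
  funext fun i => Int.cast_injective (congrFun h i)

lemma coe3_sub (x y : Fin 3 → ℤ) : coe3 (x - y) = coe3 x - coe3 y := by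
  funext i; simp [coe3]

lemma coe3_add (x y : Fin 3 → ℤ) : coe3 (x + y) = coe3 x + coe3 y := by
  funext i; simp [coe3]

lemma coe3_zero : coe3 0 = 0 := by funext i; simp [coe3]

lemma coe3_zsmul (a : ℤ) (x : Fin 3 → ℤ) : coe3 (a • x) = (a : ℝ) • coe3 x := by
  funext i; simp [coe3]

lemma coe3_comb (a b c : ℤ) (u v w : Fin 3 → ℤ) :
    coe3 (a•u + b•v + c•w) = (a:ℝ)•coe3 u + (b:ℝ)•coe3 v + (c:ℝ)•coe3 w := by
  funext i; simp only [coe3, Pi.add_apply, Pi.smul_apply, smul_eq_mul]; push_cast; ring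

lemma mem_span_triple {R M : Type*} [CommRing R] [AddCommGroup M] [Module R M] {u v w x : M} :
    x ∈ Submodule.span R {u, v, w} ↔ ∃ a b c : R, x = a • u + b • v + c • w := by
  constructor
  · intro hx
    rw [Submodule.mem_span_insert] at hx
    obtain ⟨a, z, hz, rfl⟩ := hx
    obtain ⟨b, c, hbc⟩ := Submodule.mem_span_pair.mp hz
    exact ⟨a, b, c, by rw [← hbc]; abel⟩
  · rintro ⟨a, b, c, rfl⟩
    refine add_mem (add_mem ?_ ?_) ?_ <;>
      exact Submodule.smul_mem _ _ (Submodule.subset_span (by simp))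

lemma li3 {a b c : Fin 3 → ℝ} (hli : LinearIndependent ℝ ![a,b,c]) {p q r p' q' r' : ℝ}
    (h : p•a+q•b+r•c = p'•a+q'•b+r'•c) : p = p' ∧ q = q' ∧ r = r' := by
  have h0 : ∀ i, ![p-p', q-q', r-r'] i = 0 := by
    apply Fintype.linearIndependent_iff.mp hli
    rw [Fin.sum_univ_three]
    simp only [Matrix.cons_val_zero, Matrix.cons_val_one, Matrix.head_cons,
      Matrix.cons_val_two, Matrix.tail_cons]
    rw [sub_smul, sub_smul, sub_smul]
    rw [← sub_eq_zero] at h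
    rw [← h]; abel
  refine ⟨sub_eq_zero.mp (by simpa using h0 0), sub_eq_zero.mp (by simpa using h0 1),
    sub_eq_zero.mp (by simpa using h0 2)⟩

lemma span3_coords {a b c : Fin 3 → ℝ} (hli : LinearIndependent ℝ ![a,b,c]) (x : Fin 3 → ℝ) :
    ∃ p q r : ℝ, x = p•a+q•b+r•c := by
  have ht : Submodule.span ℝ (Set.range ![a,b,c]) = ⊤ :=
    hli.span_eq_top_of_card_eq_finrank (by simp)
  have hx : x ∈ Submodule.span ℝ ({a,b,c} : Set (Fin 3 → ℝ)) := by
    have : Set.range ![a,b,c] = {a,b,c} := by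
      ext y; simp [Fin.exists_fin_succ, Matrix.range_cons, Matrix.range_empty]
      tauto
    rw [← this, ht]; trivial
  exact mem_span_triple.mp hx

lemma prim_rat_int {w : Fin 3 → ℤ} (hp : IsPrimitive w) {γ : ℝ} {z : Fin 3 → ℤ}
    (h : ∀ i, (z i : ℝ) = γ * (w i : ℝ)) : ∃ m : ℤ, (m : ℝ) = γ := by
  set d : ℤ := (Int.gcd (w 1) (w 2) : ℤ) with hd
  have h1 : (1 : ℤ) = w 0 * Int.gcdA (w 0) d + d * Int.gcdB (w 0) d := by
    have := Int.gcd_eq_gcd_ab (w 0) d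
    rw [show Int.gcd (w 0) d = 1 from ?_] at this
    · exact_mod_cast this
    · have : d.natAbs = Int.gcd (w 1) (w 2) := by simp [hd]
      unfold IsPrimitive at hp
      rwa [Int.gcd, this]
  have h2 : d = w 1 * Int.gcdA (w 1) (w 2) + w 2 * Int.gcdB (w 1) (w 2) :=
    Int.gcd_eq_gcd_ab (w 1) (w 2)
  set A := Int.gcdA (w 0) d; set B := Int.gcdB (w 0) d
  set A' := Int.gcdA (w 1) (w 2); set B' := Int.gcdB (w 1) (w 2)
  refine ⟨A * z 0 + B * A' * z 1 + B * B' * z 2, ?_⟩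
  have key : (1 : ℤ) = w 0 * A + (w 1 * A' + w 2 * B') * B := by rw [← h2]; exact h1
  have keyR : ((w 0 : ℝ) * A + ((w 1 : ℝ) * A' + (w 2 : ℝ) * B') * B) = 1 := by
    exact_mod_cast key.symm
  push_cast
  rw [h 0, h 1, h 2]
  linear_combination γ * keyR

/-- The ℤ-submodule of integer points lying on the real plane spanned by `coe3 v, coe3 w`. -/
def L2sub (v w : Fin 3 → ℤ) : Submodule ℤ (Fin 3 → ℤ) where
  carrier := {x | coe3 x ∈ Submodule.span ℝ {coe3 v, coe3 w}}
  add_mem' {x y} hx hy := by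
    simp only [Set.mem_setOf_eq] at *
    rw [coe3_add]; exact add_mem hx hy
  zero_mem' := by simp only [Set.mem_setOf_eq, coe3_zero]; exact zero_mem _
  smul_mem' a x hx := by
    simp only [Set.mem_setOf_eq] at *
    rw [coe3_zsmul]; exact Submodule.smul_mem _ _ hx

lemma fract_combo (x : Fin 3 → ℤ) (v w : Fin 3 → ℤ) {s t : ℝ}
    (hx : coe3 x = s • coe3 v + t • coe3 w) :
    coe3 (x - ((⌊s⌋ : ℤ) • v + (⌊t⌋ : ℤ) • w)) = Int.fract s • coe3 v + Int.fract t • coe3 w := by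
  rw [coe3_sub, coe3_add, coe3_zsmul, coe3_zsmul, hx, Int.fract, Int.fract]
  module

/-- H2pts v w is in bijection with the image of L2sub v w in the quotient by Λ. -/
lemma card_H2 (u v w : Fin 3 → ℤ) (Λ : Submodule ℤ (Fin 3 → ℤ))
    (hΛ : Λ = Submodule.span ℤ {u, v, w})
    (hli : LinearIndependent ℝ ![coe3 u, coe3 v, coe3 w]) :
    Nat.card (H2pts v w) = Nat.card ((L2sub v w).map Λ.mkQ) := by
  have memH2 : ∀ x ∈ H2pts v w, x ∈ L2sub v w := by
    rintro x ⟨s, t, _, _, _, _, hx⟩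
    exact Submodule.mem_span_pair.mpr ⟨s, t, hx.symm⟩
  refine Nat.card_congr (Equiv.ofBijective
    (fun x => ⟨Λ.mkQ x.1, Submodule.mem_map_of_mem (memH2 x.1 x.2)⟩) ⟨?_, ?_⟩)
  · rintro ⟨x, s, t, hs0, hs1, ht0, ht1, hx⟩ ⟨y, s', t', hs0', hs1', ht0', ht1', hy⟩ hxy
    simp only [Subtype.mk.injEq] at hxy ⊢
    have hmem : x - y ∈ Λ := (Submodule.Quotient.eq Λ).mp hxy
    rw [hΛ] at hmem
    obtain ⟨a, b, c, habc⟩ := mem_span_triple.mp hmem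
    have : (0:ℝ) • coe3 u + (s - s') • coe3 v + (t - t') • coe3 w
        = (a:ℝ) • coe3 u + (b:ℝ) • coe3 v + (c:ℝ) • coe3 w := by
      rw [← coe3_comb, ← habc, coe3_sub, hx, hy]; module
    obtain ⟨ha, hb, hc⟩ := li3 hli this
    have hb0 : b = 0 := by
      have h1 : (b:ℝ) < 1 := by rw [← hb]; linarith
      have h2 : (-1:ℝ) < (b:ℝ) := by rw [← hb]; linarith
      have h1' : b < 1 := by exact_mod_cast h1
      have h2' : -1 < b := by exact_mod_cast h2
      omega
    have hc0 : c = 0 := by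
      have h1 : (c:ℝ) < 1 := by rw [← hc]; linarith
      have h2 : (-1:ℝ) < (c:ℝ) := by rw [← hc]; linarith
      have h1' : c < 1 := by exact_mod_cast h1
      have h2' : -1 < c := by exact_mod_cast h2
      omega
    have ha0 : a = 0 := by exact_mod_cast ha.symm
    have : x - y = 0 := by rw [habc, ha0, hb0, hc0]; simp
    exact Subtype.ext (sub_eq_zero.mp this)
  · rintro ⟨g, x, hxL, rfl⟩
    obtain ⟨s, t, hst⟩ := Submodule.mem_span_pair.mp hxL
    have hx : coe3 x = s • coe3 v + t • coe3 w := hst.symm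
    set h := x - ((⌊s⌋ : ℤ) • v + (⌊t⌋ : ℤ) • w) with hh
    have hco : coe3 h = Int.fract s • coe3 v + Int.fract t • coe3 w := fract_combo x v w hx
    have hmemH : h ∈ H2pts v w :=
      ⟨Int.fract s, Int.fract t, Int.fract_nonneg s, Int.fract_lt_one s,
        Int.fract_nonneg t, Int.fract_lt_one t, hco⟩
    refine ⟨⟨h, hmemH⟩, ?_⟩
    refine Subtype.ext (show Λ.mkQ h = Λ.mkQ x from ?_)
    rw [Submodule.mkQ_apply, Submodule.mkQ_apply, Submodule.Quotient.eq]
    rw [hΛ]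
    exact mem_span_triple.mpr ⟨0, -⌊s⌋, -⌊t⌋, by rw [hh]; module⟩

lemma fract_combo3 (x u v w : Fin 3 → ℤ) {p q r : ℝ}
    (hx : coe3 x = p • coe3 u + q • coe3 v + r • coe3 w) :
    coe3 (x - ((⌊p⌋ : ℤ) • u + (⌊q⌋ : ℤ) • v + (⌊r⌋ : ℤ) • w))
      = Int.fract p • coe3 u + Int.fract q • coe3 v + Int.fract r • coe3 w := by
  rw [coe3_sub, coe3_add, coe3_add, coe3_zsmul, coe3_zsmul, coe3_zsmul, hx,
    Int.fract, Int.fract, Int.fract]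
  module

lemma card_H3 (u v w : Fin 3 → ℤ) (Λ : Submodule ℤ (Fin 3 → ℤ))
    (hΛ : Λ = Submodule.span ℤ {u, v, w})
    (hli : LinearIndependent ℝ ![coe3 u, coe3 v, coe3 w]) :
    Nat.card (H3pts u v w) = Nat.card ((Fin 3 → ℤ) ⧸ Λ) := by
  refine Nat.card_congr (Equiv.ofBijective (fun x => Λ.mkQ x.1) ⟨?_, ?_⟩)
  · rintro ⟨x, p, q, r, hp0, hp1, hq0, hq1, hr0, hr1, hx⟩
      ⟨y, p', q', r', hp0', hp1', hq0', hq1', hr0', hr1', hy⟩ hxy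
    refine Subtype.ext ?_
    have hmem : x - y ∈ Λ := (Submodule.Quotient.eq Λ).mp hxy
    rw [hΛ] at hmem
    obtain ⟨a, b, c, habc⟩ := mem_span_triple.mp hmem
    have : (p - p') • coe3 u + (q - q') • coe3 v + (r - r') • coe3 w
        = (a:ℝ) • coe3 u + (b:ℝ) • coe3 v + (c:ℝ) • coe3 w := by
      rw [← coe3_comb, ← habc, coe3_sub, hx, hy]; module
    obtain ⟨ha, hb, hc⟩ := li3 hli this
    have ha0 : a = 0 := by
      have h1 : (a:ℝ) < 1 := by rw [← ha]; linarith
      have h2 : (-1:ℝ) < (a:ℝ) := by rw [← ha]; linarith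
      have h1' : a < 1 := by exact_mod_cast h1
      have h2' : -1 < a := by exact_mod_cast h2
      omega
    have hb0 : b = 0 := by
      have h1 : (b:ℝ) < 1 := by rw [← hb]; linarith
      have h2 : (-1:ℝ) < (b:ℝ) := by rw [← hb]; linarith
      have h1' : b < 1 := by exact_mod_cast h1
      have h2' : -1 < b := by exact_mod_cast h2
      omega
    have hc0 : c = 0 := by
      have h1 : (c:ℝ) < 1 := by rw [← hc]; linarith
      have h2 : (-1:ℝ) < (c:ℝ) := by rw [← hc]; linarith
      have h1' : c < 1 := by exact_mod_cast h1
      have h2' : -1 < c := by exact_mod_cast h2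
      omega
    have : x - y = 0 := by rw [habc, ha0, hb0, hc0]; simp
    exact sub_eq_zero.mp this
  · intro g
    obtain ⟨x, rfl⟩ := Λ.mkQ_surjective g
    obtain ⟨p, q, r, hx⟩ := span3_coords hli (coe3 x)
    set h := x - ((⌊p⌋ : ℤ) • u + (⌊q⌋ : ℤ) • v + (⌊r⌋ : ℤ) • w) with hh
    have hco := fract_combo3 x u v w hx
    refine ⟨⟨h, Int.fract p, Int.fract q, Int.fract r, Int.fract_nonneg p, Int.fract_lt_one p,
      Int.fract_nonneg q, Int.fract_lt_one q, Int.fract_nonneg r, Int.fract_lt_one r, hco⟩, ?_⟩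
    show Λ.mkQ h = Submodule.Quotient.mk x
    rw [Submodule.mkQ_apply, Submodule.Quotient.eq, hΛ]
    exact mem_span_triple.mpr ⟨-⌊p⌋, -⌊q⌋, -⌊r⌋, by rw [hh]; module⟩

lemma inter_bot (u v w : Fin 3 → ℤ) (Λ : Submodule ℤ (Fin 3 → ℤ))
    (hΛ : Λ = Submodule.span ℤ {u, v, w})
    (hli : LinearIndependent ℝ ![coe3 u, coe3 v, coe3 w]) (hpw : IsPrimitive w) :
    (L2sub v w).map Λ.mkQ ⊓ (L2sub u w).map Λ.mkQ = ⊥ := by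
  rw [eq_bot_iff]
  rintro g ⟨⟨x, hxL, rfl⟩, ⟨y, hyL, hyx⟩⟩
  obtain ⟨β, γ, hx⟩ := Submodule.mem_span_pair.mp hxL
  obtain ⟨α, δ, hy⟩ := Submodule.mem_span_pair.mp hyL
  have hmem : y - x ∈ Λ := (Submodule.Quotient.eq Λ).mp hyx
  rw [hΛ] at hmem
  obtain ⟨a, b, c, habc⟩ := mem_span_triple.mp hmem
  have : α • coe3 u + (-β) • coe3 v + (δ - γ) • coe3 w
      = (a:ℝ) • coe3 u + (b:ℝ) • coe3 v + (c:ℝ) • coe3 w := by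
    rw [← coe3_comb, ← habc, coe3_sub, ← hx, ← hy]; module
  obtain ⟨ha, hb, hc⟩ := li3 hli this
  -- coe3 (x - (-b) • v) = γ • coe3 w  where (-b : ℝ) = β
  have hz : ∀ i, ((x + b • v) i : ℝ) = γ * (w i : ℝ) := by
    intro i
    have : coe3 (x + b • v) = γ • coe3 w := by
      rw [coe3_add, coe3_zsmul, ← hx, ← hb]
      module
    have := congrFun this i
    simpa [coe3, Pi.smul_apply, smul_eq_mul] using this
  obtain ⟨m, hm⟩ := prim_rat_int hpw hz
  have hxmem : x ∈ Submodule.span ℤ {u, v, w} := by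
    refine mem_span_triple.mpr ⟨0, -b, m, coe3_injective ?_⟩
    rw [coe3_comb, ← hx]
    push_cast
    rw [hm, ← hb]
    module
  have : Λ.mkQ x = 0 := by
    rw [Submodule.mkQ_apply, Submodule.Quotient.mk_eq_zero, hΛ]
    exact hxmem
  simp [this]

lemma li_rot {a b c : Fin 3 → ℝ} (h : LinearIndependent ℝ ![a,b,c]) :
    LinearIndependent ℝ ![c,a,b] := by
  have he : ![c,a,b] = ![a,b,c] ∘ (⟨![2,0,1], ![1,2,0], by decide, by decide⟩ : Equiv.Perm (Fin 3)) := by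
    funext i; fin_cases i <;> rfl
  rw [he]
  exact h.comp _ (Equiv.injective _)

lemma li_swap {a b c : Fin 3 → ℝ} (h : LinearIndependent ℝ ![a,b,c]) :
    LinearIndependent ℝ ![b,a,c] := by
  have he : ![b,a,c] = ![a,b,c] ∘ (⟨![1,0,2], ![1,0,2], by decide, by decide⟩ : Equiv.Perm (Fin 3)) := by
    funext i; fin_cases i <;> rfl
  rw [he]
  exact h.comp _ (Equiv.injective _)

lemma H2pts_comm (a b : Fin 3 → ℤ) : H2pts a b = H2pts b a := by
  ext z
  constructor <;> rintro ⟨s, t, hs0, hs1, ht0, ht1, hz⟩ <;>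
    exact ⟨t, s, ht0, ht1, hs0, hs1, by rw [hz]; abel⟩

lemma H3pts_rot (a b c : Fin 3 → ℤ) : H3pts c a b = H3pts a b c := by
  ext z
  constructor
  · rintro ⟨s, t, u, hs0, hs1, ht0, ht1, hu0, hu1, hz⟩
    exact ⟨t, u, s, ht0, ht1, hu0, hu1, hs0, hs1, by rw [hz]; abel⟩
  · rintro ⟨s, t, u, hs0, hs1, ht0, ht1, hu0, hu1, hz⟩
    exact ⟨u, s, t, hu0, hu1, hs0, hs1, ht0, ht1, by rw [hz]; abel⟩

lemma key (u v w : Fin 3 → ℤ) (hpw : IsPrimitive w)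
    (hli : LinearIndependent ℝ ![coe3 u, coe3 v, coe3 w]) :
    (H2pts v w).ncard * (H2pts u w).ncard ∣ (H3pts u v w).ncard := by
  set Λ : Submodule ℤ (Fin 3 → ℤ) := Submodule.span ℤ {u, v, w} with hΛ
  set A := (L2sub v w).map Λ.mkQ with hA
  set B := (L2sub u w).map Λ.mkQ with hB
  have hli' : LinearIndependent ℝ ![coe3 v, coe3 u, coe3 w] := li_swap hli
  have hcardA : Nat.card (H2pts v w) = Nat.card A := card_H2 u v w Λ hΛ hli
  have hcardB : Nat.card (H2pts u w) = Nat.card B :=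
    card_H2 v u w Λ (by rw [hΛ, Set.insert_comm]) hli'
  have hcard3 : Nat.card (H3pts u v w) = Nat.card ((Fin 3 → ℤ) ⧸ Λ) := card_H3 u v w Λ hΛ hli
  have hint : A ⊓ B = ⊥ := inter_bot u v w Λ hΛ hli hpw
  set f : (A × B) →ₗ[ℤ] ((Fin 3 → ℤ) ⧸ Λ) := (A.subtype).coprod (B.subtype) with hf
  have hinj : Function.Injective f := by
    rw [← LinearMap.ker_eq_bot, Submodule.eq_bot_iff]
    rintro ⟨a, b⟩ hab
    have hab' : (a : (Fin 3 → ℤ) ⧸ Λ) + (b : (Fin 3 → ℤ) ⧸ Λ) = 0 := hab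
    have haAB : (a : (Fin 3 → ℤ) ⧸ Λ) ∈ A ⊓ B :=
      ⟨a.2, by rw [eq_neg_of_add_eq_zero_left hab']; exact neg_mem b.2⟩
    rw [hint, Submodule.mem_bot] at haAB
    have hb0 : (b : (Fin 3 → ℤ) ⧸ Λ) = 0 := by
      rw [haAB, zero_add] at hab'; exact hab'
    ext
    · exact haAB
    · exact hb0
  have heq : Nat.card A * Nat.card B = Nat.card (LinearMap.range f) := by
    rw [← Nat.card_prod]
    exact Nat.card_congr (LinearEquiv.ofInjective f hinj).toEquiv
  have hdvd : Nat.card (LinearMap.range f) ∣ Nat.card ((Fin 3 → ℤ) ⧸ Λ) :=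
    AddSubgroup.card_addSubgroup_dvd_card (LinearMap.range f).toAddSubgroup
  rw [← Nat.card_coe_set_eq, ← Nat.card_coe_set_eq, ← Nat.card_coe_set_eq,
    hcardA, hcardB, hcard3, heq]
  exact hdvd

/-- For all distinct `i, j ∈ {1,2,3}`, the product `μ_i·μ_j` divides `μ`. -/
theorem products_of_multiplicities_divide (w₁ w₂ w₃ : Fin 3 → ℤ)
    (hnn₁ : ∀ i, 0 ≤ w₁ i) (hnn₂ : ∀ i, 0 ≤ w₂ i) (hnn₃ : ∀ i, 0 ≤ w₃ i)
    (hp₁ : IsPrimitive w₁) (hp₂ : IsPrimitive w₂) (hp₃ : IsPrimitive w₃)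
    (hli : LinearIndependent ℝ ![coe3 w₁, coe3 w₂, coe3 w₃]) :
    (H2pts w₂ w₃).ncard * (H2pts w₁ w₃).ncard ∣ (H3pts w₁ w₂ w₃).ncard ∧
    (H2pts w₂ w₃).ncard * (H2pts w₁ w₂).ncard ∣ (H3pts w₁ w₂ w₃).ncard ∧
    (H2pts w₁ w₃).ncard * (H2pts w₁ w₂).ncard ∣ (H3pts w₁ w₂ w₃).ncard := by
  refine ⟨key w₁ w₂ w₃ hp₃ hli, ?_, ?_⟩
  · have h := key w₃ w₁ w₂ hp₂ (li_rot hli)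
    rwa [H2pts_comm w₃ w₂, H3pts_rot w₁ w₂ w₃, mul_comm] at h
  · have h := key w₂ w₃ w₁ hp₁ (li_rot (li_rot hli))
    rwa [H2pts_comm w₃ w₁, H2pts_comm w₂ w₁, H3pts_rot w₃ w₁ w₂, H3pts_rot w₁ w₂ w₃] at h

end
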